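/- Let Ω be a convex subset of a topological vector space X. Then ri(Ω) ⊆ iri(Ω) ⊆ qri(Ω). If moreover X is locally convex and ri(Ω) ≠ ∅, then ri(Ω) = iri(Ω) = qri(Ω). -/

import Mathlib

open Set Pointwise Filter Topology

/-- The cone generated by a set `A`: `{t • a | t ≥ 0, a ∈ A}`. -/
def coneGen {X : Type*} [AddCommGroup X] [Module ℝ X] (A : Set X) : Set X :=
  {y | ∃ t : ℝ, 0 ≤ t ∧ ∃ a ∈ A, y = t • a}

/-- A set is a linear subspace if it is the carrier of a submodule. -/
def IsLinSubspace {X : Type*} [AddCommGroup X] [Module ℝ X] (s : Set X) : Prop :=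
  ∃ L : Submodule ℝ X, (L : Set X) = s

/-- Intrinsic relative interior. -/
def iri {X : Type*} [AddCommGroup X] [Module ℝ X] (Ω : Set X) : Set X :=
  {x ∈ Ω | IsLinSubspace (coneGen ((fun y => y - x) '' Ω))}

/-- Quasi-relative interior. -/
def qri {X : Type*} [AddCommGroup X] [Module ℝ X] [TopologicalSpace X] (Ω : Set X) : Set X :=
  {x ∈ Ω | IsLinSubspace (closure (coneGen ((fun y => y - x) '' Ω)))}

/-- Relative interior in a topological vector space. -/
def ri {X : Type*} [AddCommGroup X] [Module ℝ X] [TopologicalSpace X] (Ω : Set X) : Set X :=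
  {x ∈ Ω | ∃ V ∈ nhds x, V ∩ closure ((affineSpan ℝ Ω : Set X)) ⊆ Ω}

/-- Normal cone (functional-analytic version), a subset of the topological dual. -/
def normalCone {X : Type*} [AddCommGroup X] [Module ℝ X] [TopologicalSpace X]
    (Ω : Set X) (xb : X) : Set (X →L[ℝ] ℝ) :=
  {f | ∀ x ∈ Ω, f (x - xb) ≤ 0}

set_option linter.unusedSectionVars false

section Aux

variable {X : Type*} [AddCommGroup X] [Module ℝ X]
  [TopologicalSpace X] [IsTopologicalAddGroup X] [ContinuousSMul ℝ X] {Ω : Set X}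

/-- Image of Ω under subtraction of a member spans the direction. -/
lemma aux_span_image {x : X} (hx : x ∈ Ω) :
    Submodule.span ℝ ((fun y => y - x) '' Ω) = (affineSpan ℝ Ω).direction := by
  rw [direction_affineSpan, vectorSpan_eq_span_vsub_set_right ℝ hx]
  simp only [vsub_eq_sub]

/-- Membership in the closed affine hull via the closed direction. -/
lemma aux_mem_clAff_iff {x : X} (hx : x ∈ Ω) {y : X} :
    y ∈ closure ((affineSpan ℝ Ω : Set X)) ↔
      y - x ∈ (affineSpan ℝ Ω).direction.topologicalClosure := by
  have himg : (fun y => y - x) '' ((affineSpan ℝ Ω : Set X)) =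
      ((affineSpan ℝ Ω).direction : Set X) := by
    ext m
    constructor
    · rintro ⟨z, hz, rfl⟩
      simpa [vsub_eq_sub] using
        AffineSubspace.vsub_mem_direction hz (subset_affineSpan ℝ Ω hx)
    · intro hm
      refine ⟨x + m, ?_, (by simp)⟩
      simpa [vadd_eq_add, add_comm] using
        AffineSubspace.vadd_mem_of_mem_direction hm (subset_affineSpan ℝ Ω hx)
  have he : closure ((fun y => y - x) '' (affineSpan ℝ Ω : Set X)) =
      (fun y => y - x) '' closure ((affineSpan ℝ Ω : Set X)) :=
    ((Homeomorph.subRight x).image_closure _).symm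
  have hcoe : ((affineSpan ℝ Ω).direction.topologicalClosure : Set X)
      = closure ((affineSpan ℝ Ω).direction : Set X) :=
    Submodule.topologicalClosure_coe _
  constructor
  · intro hy
    have : y - x ∈ (fun y => y - x) '' closure ((affineSpan ℝ Ω : Set X)) := ⟨y, hy, rfl⟩
    rw [← he, himg] at this
    rw [← SetLike.mem_coe, hcoe]
    exact this
  · intro hy
    rw [← SetLike.mem_coe, hcoe, ← himg, he] at hy
    obtain ⟨z, hz, hzx⟩ := hy
    have hzy : z = y := sub_left_inj.mp hzx
    exact hzy ▸ hz

end Aux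

section Aux2

variable {X : Type*} [AddCommGroup X] [Module ℝ X]
  [TopologicalSpace X] [IsTopologicalAddGroup X] [ContinuousSMul ℝ X] {Ω : Set X}

lemma aux_ri_subset_iri : ri Ω ⊆ iri Ω := by
  rintro x ⟨hxΩ, V, hV, hVsub⟩
  refine ⟨hxΩ, (affineSpan ℝ Ω).direction, Set.Subset.antisymm ?_ ?_⟩
  · -- direction ⊆ coneGen
    intro y hy
    have hcont : ContinuousAt (fun t : ℝ => x + t • y) 0 :=
      (continuous_const.add (continuous_id.smul continuous_const)).continuousAt
    have hP : (fun t : ℝ => x + t • y) ⁻¹' V ∈ 𝓝 (0:ℝ) := by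
      exact hcont.preimage_mem_nhds (by simpa using hV)
    have hne : ((fun t : ℝ => x + t • y) ⁻¹' V ∩ Ioi 0).Nonempty :=
      Filter.nonempty_of_mem
        (inter_mem (nhdsWithin_le_nhds hP) (self_mem_nhdsWithin (s := Ioi (0:ℝ))))
    obtain ⟨t, htV, ht0⟩ := hne
    have hspan : x + t • y ∈ (affineSpan ℝ Ω : Set X) := by
      have := AffineSubspace.vadd_mem_of_mem_direction
        (Submodule.smul_mem _ t hy) (subset_affineSpan ℝ Ω hxΩ)
      simpa [vadd_eq_add, add_comm] using this
    have hΩ' : x + t • y ∈ Ω := hVsub ⟨htV, subset_closure hspan⟩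
    refine ⟨t⁻¹, le_of_lt (inv_pos.mpr ht0), (x + t • y) - x, ⟨x + t • y, hΩ', rfl⟩, ?_⟩
    have h1 : x + t • y - x = t • y := by abel
    rw [h1, smul_smul, inv_mul_cancel₀ (ne_of_gt ht0), one_smul]
  · -- coneGen ⊆ direction
    rintro z ⟨t, ht, a, ⟨ω, hω, rfl⟩, rfl⟩
    refine Submodule.smul_mem _ t ?_
    simpa [vsub_eq_sub] using
      AffineSubspace.vsub_mem_direction (subset_affineSpan ℝ Ω hω) (subset_affineSpan ℝ Ω hxΩ)

lemma aux_iri_subset_qri : iri Ω ⊆ qri Ω := by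
  rintro x ⟨hxΩ, L, hL⟩
  exact ⟨hxΩ, L.topologicalClosure, by rw [Submodule.topologicalClosure_coe, hL]⟩

lemma aux_segment (hconv : Convex ℝ Ω) {p y : X} (hp : p ∈ ri Ω) (hy : y ∈ Ω)
    {s : ℝ} (hs0 : 0 ≤ s) (hs1 : s < 1) : (1 - s) • p + s • y ∈ ri Ω := by
  obtain ⟨hpΩ, V, hV, hVsub⟩ := hp
  have hs1' : (1 - s) ≠ 0 := by intro h; apply absurd hs1; simp; linarith
  set e : X ≃ₜ X := (Homeomorph.smulOfNeZero (1 - s) hs1').trans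
    (Homeomorph.addRight (s • y)) with he
  have heapp : ∀ u : X, e u = (1 - s) • u + s • y := fun u => rfl
  refine ⟨hconv hpΩ hy (by linarith) hs0 (by ring), e '' V, ?_, ?_⟩
  · have h0 : e p = (1 - s) • p + s • y := rfl
    rw [← h0]
    exact e.isOpenEmbedding.image_mem_nhds.mpr hV
  · rintro w ⟨⟨v, hvV, rfl⟩, hwcl⟩
    rw [heapp] at hwcl ⊢
    have hvM : v - y ∈ (affineSpan ℝ Ω).direction.topologicalClosure := by
      have h1 : (1 - s) • v + s • y - y = (1 - s) • (v - y) := by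
        rw [smul_sub]; module
      rw [aux_mem_clAff_iff hy, h1] at hwcl
      have := Submodule.smul_mem _ ((1 - s)⁻¹ : ℝ) hwcl
      rwa [smul_smul, inv_mul_cancel₀ hs1', one_smul] at this
    have hvΩ : v ∈ Ω := hVsub ⟨hvV, (aux_mem_clAff_iff hy).mpr hvM⟩
    exact hconv hvΩ hy (by linarith) hs0 (by ring)

end Aux2

section Aux3

variable {X : Type*} [AddCommGroup X] [Module ℝ X]
  [TopologicalSpace X] [IsTopologicalAddGroup X] [ContinuousSMul ℝ X] {Ω : Set X}

lemma aux_qri_subset_ri (hconv : Convex ℝ Ω) (lc : LocallyConvexSpace ℝ X)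
    {x₀ : X} (hx₀ : x₀ ∈ ri Ω) : qri Ω ⊆ ri Ω := by
  obtain ⟨hx₀Ω, V, hV, hVsub⟩ := hx₀
  obtain ⟨S, hS, hSconv, hSV⟩ :=
    (locallyConvexSpace_iff_exists_convex_subset ℝ X).mp lc x₀ V hV
  have hx₀S : x₀ ∈ S := mem_of_mem_nhds hS
  set M := (affineSpan ℝ Ω).direction.topologicalClosure with hM
  set T : Set X := {u | x₀ + u ∈ S ∧ x₀ - u ∈ S} with hTdef
  have hT0 : T ∈ 𝓝 (0:X) := by
    have h1 : (fun u : X => x₀ + u) ⁻¹' S ∈ 𝓝 (0:X) :=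
      (continuous_const.add continuous_id).continuousAt.preimage_mem_nhds (by simpa using hS)
    have h2 : (fun u : X => x₀ - u) ⁻¹' S ∈ 𝓝 (0:X) :=
      (continuous_const.sub continuous_id).continuousAt.preimage_mem_nhds (by simpa using hS)
    exact inter_mem h1 h2
  rintro xb ⟨hxbΩ, L, hL⟩
  have hx₀C : x₀ - xb ∈ coneGen ((fun y => y - xb) '' Ω) :=
    ⟨1, zero_le_one, x₀ - xb, ⟨x₀, hx₀Ω, rfl⟩, (one_smul ℝ _).symm⟩
  have hclL : xb - x₀ ∈ closure (coneGen ((fun y => y - xb) '' Ω)) := by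
    rw [← hL]
    have h1 : x₀ - xb ∈ L := by
      rw [← SetLike.mem_coe, hL]; exact subset_closure hx₀C
    have := L.neg_mem h1
    rwa [neg_sub] at this
  set e2 : X ≃ₜ X := (Homeomorph.smulOfNeZero (2⁻¹ : ℝ) (by norm_num)).trans
    (Homeomorph.addLeft (xb - x₀)) with he2
  have he2app : ∀ u : X, e2 u = (xb - x₀) + (2⁻¹ : ℝ) • u := fun u => rfl
  have hN : (e2 '' T) ∈ 𝓝 (xb - x₀) := by
    have h0 : e2 (0:X) = xb - x₀ := by rw [he2app]; simp
    rw [← h0]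
    exact e2.isOpenEmbedding.image_mem_nhds.mpr hT0
  obtain ⟨c, hcN, hcC⟩ := mem_closure_iff_nhds.mp hclL _ hN
  obtain ⟨w, hwT, hcw⟩ := hcN
  obtain ⟨t, ht0, a, ⟨ω, hωΩ, rfl⟩, hca⟩ := hcC
  have key : (xb - x₀) + (2⁻¹ : ℝ) • w = t • (ω - xb) := by
    rw [← he2app, hcw, hca]
  -- memberships in M
  have hωM : ω - xb ∈ M := Submodule.le_topologicalClosure _ (by
    simpa [vsub_eq_sub] using
      AffineSubspace.vsub_mem_direction (subset_affineSpan ℝ Ω hωΩ) (subset_affineSpan ℝ Ω hxbΩ))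
  have hxbM : xb - x₀ ∈ M := Submodule.le_topologicalClosure _ (by
    simpa [vsub_eq_sub] using
      AffineSubspace.vsub_mem_direction (subset_affineSpan ℝ Ω hxbΩ) (subset_affineSpan ℝ Ω hx₀Ω))
  have hwM : w ∈ M := by
    have h1 : (2⁻¹:ℝ) • w = t • (ω - xb) - (xb - x₀) := by rw [← key]; abel
    have h2 : w = (2:ℝ) • ((2⁻¹:ℝ) • w) := by
      rw [smul_smul]; norm_num
    rw [h2, h1]
    exact M.smul_mem _ (M.sub_mem (M.smul_mem _ hωM) hxbM)
  have hwS1 : x₀ + w ∈ S := hwT.1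
  have hwS2 : x₀ - w ∈ S := hwT.2
  -- p := x₀ - 2⁻¹ • w is in ri Ω
  set p : X := x₀ - (2⁻¹:ℝ) • w with hpdef
  have hpS : p ∈ S := by
    have h1 := hSconv hwS2 hx₀S (by norm_num : (0:ℝ) ≤ 2⁻¹)
      (by norm_num : (0:ℝ) ≤ 2⁻¹) (by norm_num)
    have h2 : (2⁻¹:ℝ) • (x₀ - w) + (2⁻¹:ℝ) • x₀ = p := by
      rw [hpdef, smul_sub]; module
    rwa [h2] at h1
  have hpcl : p ∈ closure ((affineSpan ℝ Ω : Set X)) := by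
    rw [aux_mem_clAff_iff hx₀Ω]
    have : p - x₀ = -((2⁻¹:ℝ) • w) := by rw [hpdef]; abel
    rw [this]
    exact M.neg_mem (M.smul_mem _ hwM)
  have hpΩ : p ∈ Ω := hVsub ⟨hSV hpS, hpcl⟩
  have hpri : p ∈ ri Ω := by
    set e3 : X ≃ₜ X := (Homeomorph.smulOfNeZero (2⁻¹ : ℝ) (by norm_num)).trans
      (Homeomorph.addLeft p) with he3
    have he3app : ∀ u : X, e3 u = p + (2⁻¹ : ℝ) • u := fun u => rfl
    refine ⟨hpΩ, e3 '' T, ?_, ?_⟩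
    · have h0 : e3 (0:X) = p := by rw [he3app]; simp
      rw [← h0]
      exact e3.isOpenEmbedding.image_mem_nhds.mpr hT0
    · rintro q ⟨⟨u, huT, rfl⟩, hqcl⟩
      have hqS : e3 u ∈ S := by
        have h1 := hSconv hwS2 huT.1 (by norm_num : (0:ℝ) ≤ 2⁻¹)
          (by norm_num : (0:ℝ) ≤ 2⁻¹) (by norm_num)
        have h2 : (2⁻¹:ℝ) • (x₀ - w) + (2⁻¹:ℝ) • (x₀ + u) = e3 u := by
          rw [he3app, hpdef, smul_sub, smul_add]; module
        rwa [h2] at h1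
      exact hVsub ⟨hSV hqS, hqcl⟩
  -- now xb is a convex combination of p and ω
  have ht1 : (0:ℝ) < 1 + t := by
    have : (0:ℝ) ≤ t := ht0
    linarith
  have hsum : (1 + t) • xb = p + t • ω := by
    have hk : (2⁻¹:ℝ) • w = t • ω - t • xb - (xb - x₀) := by
      linear_combination (norm := module) key
    rw [hpdef, hk, add_smul, one_smul]
    abel
  set s : ℝ := t / (1 + t) with hsdef
  have hs0 : 0 ≤ s := div_nonneg ht0 ht1.le
  have hs1 : s < 1 := (div_lt_one ht1).mpr (by linarith)
  have hxb : xb = (1 - s) • p + s • ω := by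
    have h1 : xb = ((1+t)⁻¹ : ℝ) • ((1+t) • xb) := by
      rw [smul_smul, inv_mul_cancel₀ ht1.ne', one_smul]
    rw [h1, hsum, smul_add, smul_smul]
    congr 2
    · rw [hsdef]; field_simp; ring
    · rw [hsdef, div_eq_inv_mul]
  rw [hxb]
  exact aux_segment hconv hpri hωΩ hs0 hs1

end Aux3


/-- `ri Ω ⊆ iri Ω ⊆ qri Ω`, with equalities when `X` is locally convex
and `ri Ω ≠ ∅`. -/
theorem ri_subset_iri_subset_qri {X : Type*} [AddCommGroup X] [Module ℝ X]
    [TopologicalSpace X] [IsTopologicalAddGroup X] [ContinuousSMul ℝ X]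
    (Ω : Set X) (hconv : Convex ℝ Ω) :
    ri Ω ⊆ iri Ω ∧ iri Ω ⊆ qri Ω ∧
      (LocallyConvexSpace ℝ X → (ri Ω).Nonempty →
        ri Ω = iri Ω ∧ iri Ω = qri Ω) := by
  refine ⟨aux_ri_subset_iri, aux_iri_subset_qri, ?_⟩
  rintro lc ⟨x₀, hx₀⟩
  have h3 : qri Ω ⊆ ri Ω := aux_qri_subset_ri hconv lc hx₀
  exact ⟨Set.Subset.antisymm aux_ri_subset_iri (fun x hx => h3 (aux_iri_subset_qri hx)),
    Set.Subset.antisymm aux_iri_subset_qri (fun x hx => aux_ri_subset_iri (h3 hx))⟩
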